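/- Let G = ⟨a⟩ ⋊ ⟨d⟩ be the infinite dihedral group, the semidirect product of an infinite cyclic group ⟨a⟩ by a group ⟨d⟩ of order 2 with a^d = a⁻¹. Then every commutator x = [g,h] (g, h ∈ G) satisfies |x^G| ≤ 2, yet the derived subgroup G' is infinite; in particular G is not a BFC-group. -/

import Mathlib

namespace TensorNu

/-- The commutator `[x,y] = x⁻¹y⁻¹xy`. -/
def comm {K : Type*} [Group K] (x y : K) : K := x⁻¹ * y⁻¹ * x * y

/-- The infinite cyclic group `⟨a⟩`. -/
abbrev ZMul : Type := Multiplicative ℤ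

/-- The group `⟨d⟩` of order `2`, where `d` is the inversion automorphism
`a ↦ a⁻¹` of the infinite cyclic group. -/
def invC2Z : Subgroup (MulAut ZMul) := Subgroup.zpowers (MulEquiv.inv ZMul)

/-- The infinite dihedral group `G = ⟨a⟩ ⋊ ⟨d⟩`, with `a^d = a⁻¹`. -/
abbrev InfDihedral : Type := ZMul ⋊[invC2Z.subtype] invC2Z

open SemidirectProduct

/-- The reflection generator as an element of `invC2Z`. -/
def dd : invC2Z := ⟨MulEquiv.inv ZMul, Subgroup.mem_zpowers _⟩

lemma dd_sq : dd * dd = 1 := by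
  ext x
  exact inv_inv x

lemma dd_zsq : dd ^ (2:ℤ) = 1 := by
  rw [show (2:ℤ) = 1 + 1 from rfl, zpow_add, zpow_one, dd_sq]

lemma sigma_cases (σ : invC2Z) : σ = 1 ∨ σ = dd := by
  obtain ⟨k, hk⟩ := σ.2
  have hσ : σ = dd ^ k := Subtype.ext (by push_cast [dd]; exact hk.symm)
  rcases Int.even_or_odd k with ⟨m, hm⟩ | ⟨m, hm⟩
  · left
    rw [hσ, hm, show m + m = 2 * m by ring, zpow_mul, dd_zsq, one_zpow]
  · right
    rw [hσ, hm, zpow_add, zpow_one, zpow_mul, dd_zsq, one_zpow, one_mul]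

lemma dd_apply (x : ZMul) : (dd : MulAut ZMul) x = x⁻¹ := rfl

lemma dd_apply' (x : ZMul) : (invC2Z.subtype dd) x = x⁻¹ := rfl

lemma conj_inl (a : ZMul) (g : InfDihedral) :
    g * inl a * g⁻¹ = inl (invC2Z.subtype g.right a) := by
  ext <;> simp [mul_comm]

lemma comm_eq_inl (g h : InfDihedral) : comm g h = inl ((comm g h).left) := by
  have hr : (comm g h).right = 1 := by
    have : (comm g h).right = comm g.right h.right := rfl
    rw [this, comm]
    rcases sigma_cases g.right with h1 | h1 <;> rcases sigma_cases h.right with h2 | h2 <;>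
      rw [h1, h2] <;> group
  conv_lhs => rw [← inl_left_mul_inr_right (comm g h)]
  rw [hr]
  simp

lemma conjugatesOf_inl_subset (a : ZMul) :
    conjugatesOf (inl a : InfDihedral) ⊆ {inl a, inl a⁻¹} := by
  rintro x hx
  obtain ⟨c, hc⟩ := isConj_iff.mp hx
  rw [← hc, conj_inl]
  rcases sigma_cases c.right with h | h <;> rw [h] <;> simp [dd_apply]

open scoped commutatorElement in
lemma bracket_inl (a : ZMul) :
    ⁅(inl a : InfDihedral), (inr dd : InfDihedral)⁆ = inl (a * a) := by
  ext <;> simp [commutatorElement_def, dd_apply, dd_apply']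

open scoped commutatorElement in
lemma mem_comm_sub (a : ZMul) : (inl (a * a) : InfDihedral) ∈ commutator InfDihedral := by
  rw [← bracket_inl, commutator_def]
  exact Subgroup.commutator_mem_commutator (Subgroup.mem_top _) (Subgroup.mem_top _)

lemma refl_conj (n : ℤ) :
    (inl (Multiplicative.ofAdd (2*n)) * inr dd : InfDihedral)
      ∈ conjugatesOf (inr dd : InfDihedral) := by
  refine isConj_iff.mpr ⟨inl (Multiplicative.ofAdd n), ?_⟩
  ext <;> simp [dd_apply, dd_apply', two_mul, ← ofAdd_add]

theorem infDihedral_commutators_bounded_not_BFC :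
    (∀ g h : InfDihedral, (conjugatesOf (comm g h)).Finite ∧
        Nat.card (conjugatesOf (comm g h)) ≤ 2) ∧
    Infinite (commutator InfDihedral) ∧
    ¬ ∃ k : ℕ, ∀ x : InfDihedral,
        (conjugatesOf x).Finite ∧ Nat.card (conjugatesOf x) ≤ k := by
  refine ⟨fun g h => ?_, ?_, ?_⟩
  · set a := (comm g h).left with ha
    have hsub : conjugatesOf (comm g h) ⊆ {inl a, inl a⁻¹} := by
      rw [comm_eq_inl g h]
      exact conjugatesOf_inl_subset a
    have hpairfin : ({inl a, inl a⁻¹} : Set InfDihedral).Finite := (Set.finite_singleton _).insert _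
    have hfin : (conjugatesOf (comm g h)).Finite := hpairfin.subset hsub
    refine ⟨hfin, ?_⟩
    rw [Nat.card_coe_set_eq]
    calc (conjugatesOf (comm g h)).ncard ≤ ({inl a, inl a⁻¹} : Set InfDihedral).ncard :=
          Set.ncard_le_ncard hsub hpairfin
      _ ≤ 1 + 1 := by
          refine le_trans (Set.ncard_insert_le _ _) ?_
          simp
      _ ≤ 2 := by norm_num
  · refine Infinite.of_injective
      (fun n : ℤ => (⟨inl (Multiplicative.ofAdd n * Multiplicative.ofAdd n),
        mem_comm_sub _⟩ : commutator InfDihedral)) ?_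
    intro m n hmn
    have := congrArg (fun x : commutator InfDihedral => (x.1).left) hmn
    simp [← ofAdd_add] at this
    omega
  · rintro ⟨k, hk⟩
    have hfin := (hk (inr dd)).1
    have hinf : (conjugatesOf (inr dd : InfDihedral)).Infinite := by
      refine Set.infinite_of_injective_forall_mem
        (f := fun n : ℤ => (inl (Multiplicative.ofAdd (2*n)) * inr dd : InfDihedral))
        ?_ refl_conj
      intro m n hmn
      have h2 : Multiplicative.ofAdd (2*m) * (1:ZMul) = Multiplicative.ofAdd (2*n) * 1 :=
        congrArg (fun x : InfDihedral => x.left) hmn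
      rw [mul_one, mul_one] at h2
      have h3 : (2*m : ℤ) = 2*n := Multiplicative.ofAdd.injective h2
      omega
    exact hinf hfin

end TensorNu
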